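/- Let X, Y be finite types and let q be a strictly positive probability mass function on X×Y×Y for the triple (x_{k+1}, y_k, y_{k+1}). If q(x_{k+1} | y_k, y_{k+1}) = q(x_{k+1} | y_{k+1}) for all arguments (the latest y is a sufficient statistic of the latest x given the previous y), then the single-step transfer-entropy term equals the one-step mutual-information gain: I(X_{k+1} : Y_{k+1} | Y_k) = I(X_{k+1} : Y_{k+1}) − I(X_{k+1} : Y_k). (Exact discrete-time content of Theorem 2: equivalence of the single-time-step transfer entropy and the learning rate under a sufficient statistic.) -/

import Mathlib

open Finset

/-- Marginal (pushforward) of a pmf `p` on `Ω` along an observable `f`. -/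
def margin {Ω α : Type*} [Fintype Ω] [DecidableEq α] (p : Ω → ℝ) (f : Ω → α) (a : α) : ℝ :=
  ∑ ω : Ω, if f ω = a then p ω else 0

/-- Conditional probability `p(a | b)` of observable `f` given observable `g`. -/
noncomputable def condProb {Ω α β : Type*} [Fintype Ω] [DecidableEq α] [DecidableEq β]
    (p : Ω → ℝ) (f : Ω → α) (g : Ω → β) (a : α) (b : β) : ℝ :=
  margin p (fun ω => (f ω, g ω)) (a, b) / margin p g b

/-- Mutual information `I(f : g)` of observables `f` and `g`. -/
noncomputable def mutualInfo {Ω α β : Type*} [Fintype Ω] [Fintype α] [Fintype β]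
    [DecidableEq α] [DecidableEq β] (p : Ω → ℝ) (f : Ω → α) (g : Ω → β) : ℝ :=
  ∑ a : α, ∑ b : β,
    margin p (fun ω => (f ω, g ω)) (a, b) *
      Real.log (margin p (fun ω => (f ω, g ω)) (a, b) / (margin p f a * margin p g b))

/-- Conditional mutual information `I(f : g | h)` of observables `f`, `g` given `h`. -/
noncomputable def condMI {Ω α β γ : Type*} [Fintype Ω] [Fintype α] [Fintype β] [Fintype γ]
    [DecidableEq α] [DecidableEq β] [DecidableEq γ]
    (p : Ω → ℝ) (f : Ω → α) (g : Ω → β) (h : Ω → γ) : ℝ :=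
  ∑ a : α, ∑ b : β, ∑ c : γ,
    margin p (fun ω => (f ω, g ω, h ω)) (a, b, c) *
      Real.log ((margin p (fun ω => (f ω, g ω, h ω)) (a, b, c) / margin p h c) /
        ((margin p (fun ω => (f ω, h ω)) (a, c) / margin p h c) *
          (margin p (fun ω => (g ω, h ω)) (b, c) / margin p h c)))

lemma ratio_eq (qv Cc Bv Fv Av Ev Dv : ℝ) (hC : 0 < Cc) (hB : 0 < Bv)
    (hF : 0 < Fv) (hE : 0 < Ev) (hD : 0 < Dv) (hkey : qv * Dv = Av * Fv) :
    (qv / Cc) / ((Bv / Cc) * (Fv / Cc)) = (Av / (Ev * Dv)) / (Bv / (Ev * Cc)) := by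
  have h1 := hC.ne'; have h2 := hB.ne'; have h3 := hF.ne'; have h4 := hE.ne'; have h5 := hD.ne'
  field_simp
  linear_combination hkey

lemma sum_if_pull {ι : Type*} [Fintype ι] (P : Prop) [Decidable P] (f : ι → ℝ) :
    (∑ i : ι, if P then f i else 0) = if P then ∑ i, f i else 0 := by split <;> simp

section margins
variable {X Y : Type*} [Fintype X] [Fintype Y] [DecidableEq X] [DecidableEq Y]
  (q : X × Y × Y → ℝ)

lemma margin_triple (a : X) (b c : Y) :
    margin q (fun w => (w.1, w.2.2, w.2.1)) (a, b, c) = q (a, c, b) := by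
  simp [margin, Fintype.sum_prod_type, Prod.ext_iff, ite_and, Finset.sum_ite_eq']

lemma margin_id (a : X) (c b : Y) :
    margin q (fun w => (w.1, w.2)) (a, (c, b)) = q (a, c, b) := by
  simp [margin, Fintype.sum_prod_type, Prod.ext_iff, ite_and, Finset.sum_ite_eq']

lemma margin_A (a : X) (b : Y) :
    margin q (fun w => (w.1, w.2.2)) (a, b) = ∑ c : Y, q (a, c, b) := by
  simp [margin, Fintype.sum_prod_type, Prod.ext_iff, ite_and, Finset.sum_ite_eq']

lemma margin_B (a : X) (c : Y) :
    margin q (fun w => (w.1, w.2.1)) (a, c) = ∑ b : Y, q (a, c, b) := by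
  simp only [margin, Fintype.sum_prod_type]
  simp only [Prod.ext_iff, ite_and]
  rw [Finset.sum_congr rfl fun x _ => Finset.sum_congr rfl fun x1 _ =>
    sum_if_pull (x = a) (fun x2 => if x1 = c then q (x, x1, x2) else 0)]
  rw [Finset.sum_congr rfl fun x _ => sum_if_pull (x = a)
    (fun x1 => ∑ i : Y, if x1 = c then q (x, x1, i) else 0)]
  simp [Finset.sum_ite_eq']

lemma margin_GH (b c : Y) :
    margin q (fun w => (w.2.2, w.2.1)) (b, c) = ∑ a : X, q (a, c, b) := by
  simp [margin, Fintype.sum_prod_type, Prod.ext_iff, ite_and, Finset.sum_ite_eq']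

lemma margin_F (c b : Y) :
    margin q (fun w => w.2) (c, b) = ∑ a : X, q (a, c, b) := by
  simp [margin, Fintype.sum_prod_type, Prod.ext_iff, ite_and, Finset.sum_ite_eq']

lemma margin_C (c : Y) :
    margin q (fun w => w.2.1) c = ∑ a : X, ∑ b : Y, q (a, c, b) := by
  simp only [margin, Fintype.sum_prod_type]
  refine Finset.sum_congr rfl fun x _ => ?_
  rw [Finset.sum_congr rfl fun x1 _ => sum_if_pull (x1 = c) (fun x2 => q (x, x1, x2))]
  simp [Finset.sum_ite_eq']

lemma margin_D (b : Y) :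
    margin q (fun w => w.2.2) b = ∑ a : X, ∑ c : Y, q (a, c, b) := by
  simp [margin, Fintype.sum_prod_type, Prod.ext_iff, ite_and, Finset.sum_ite_eq']

lemma margin_E (a : X) :
    margin q (fun w => w.1) a = ∑ c : Y, ∑ b : Y, q (a, c, b) := by
  simp only [margin, Fintype.sum_prod_type]
  rw [Finset.sum_congr rfl fun x _ => Finset.sum_congr rfl fun x1 _ =>
    sum_if_pull (x = a) (fun y => q (x, x1, y))]
  rw [Finset.sum_congr rfl fun x _ => sum_if_pull (x = a) (fun x1 => ∑ y, q (x, x1, y))]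
  simp [Finset.sum_ite_eq']

end margins

/-- For a strictly positive pmf `q` on triples `(x_{k+1}, y_k, y_{k+1})`, if
`q(x_{k+1} | y_k, y_{k+1}) = q(x_{k+1} | y_{k+1})` for all arguments, then
`I(X_{k+1} : Y_{k+1} | Y_k) = I(X_{k+1} : Y_{k+1}) − I(X_{k+1} : Y_k)`. -/
theorem suff_implies_transfer_eq_gain {X Y : Type*} [Fintype X] [Fintype Y]
    [DecidableEq X] [DecidableEq Y]
    (q : X × Y × Y → ℝ) (hpos : ∀ ω, 0 < q ω) (hnorm : ∑ ω, q ω = 1)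
    (hsuff : ∀ x yk yk1, condProb q (fun w => w.1) (fun w => w.2) x (yk, yk1) =
      condProb q (fun w => w.1) (fun w => w.2.2) x yk1) :
    condMI q (fun w => w.1) (fun w => w.2.2) (fun w => w.2.1) =
      mutualInfo q (fun w => w.1) (fun w => w.2.2) -
        mutualInfo q (fun w => w.1) (fun w => w.2.1) := by
  classical
  -- nonemptiness
  have hΩ : Nonempty (X × Y × Y) := by
    rcases isEmpty_or_nonempty (X × Y × Y) with h | h
    · simp at hnorm
    · exact h
  haveI : Nonempty X := ⟨hΩ.some.1⟩
  haveI : Nonempty Y := ⟨hΩ.some.2.1⟩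
  -- abbreviations
  set A : X → Y → ℝ := fun a b => ∑ c : Y, q (a, c, b) with hAdef
  set B : X → Y → ℝ := fun a c => ∑ b : Y, q (a, c, b) with hBdef
  set C : Y → ℝ := fun c => ∑ a : X, ∑ b : Y, q (a, c, b) with hCdef
  set D : Y → ℝ := fun b => ∑ a : X, ∑ c : Y, q (a, c, b) with hDdef
  set E : X → ℝ := fun a => ∑ c : Y, ∑ b : Y, q (a, c, b) with hEdef
  set F : Y → Y → ℝ := fun c b => ∑ a : X, q (a, c, b) with hFdef
  have hApos : ∀ a b, 0 < A a b := fun a b =>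
    Finset.sum_pos (fun i _ => hpos _) univ_nonempty
  have hBpos : ∀ a c, 0 < B a c := fun a c =>
    Finset.sum_pos (fun i _ => hpos _) univ_nonempty
  have hCpos : ∀ c, 0 < C c := fun c =>
    Finset.sum_pos (fun i _ => Finset.sum_pos (fun j _ => hpos _) univ_nonempty) univ_nonempty
  have hDpos : ∀ b, 0 < D b := fun b =>
    Finset.sum_pos (fun i _ => Finset.sum_pos (fun j _ => hpos _) univ_nonempty) univ_nonempty
  have hEpos : ∀ a, 0 < E a := fun a =>
    Finset.sum_pos (fun i _ => Finset.sum_pos (fun j _ => hpos _) univ_nonempty) univ_nonempty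
  have hFpos : ∀ c b, 0 < F c b := fun c b =>
    Finset.sum_pos (fun i _ => hpos _) univ_nonempty
  -- sufficiency in explicit form: q(a,c,b) * D b = A a b * F c b
  have hkey : ∀ a c b, q (a, c, b) * D b = A a b * F c b := by
    intro a c b
    have h := hsuff a c b
    rw [condProb, condProb, margin_id, margin_A, margin_F, margin_D] at h
    rw [div_eq_div_iff (hFpos c b).ne' (hDpos b).ne'] at h
    exact h
  -- pointwise log identity
  have hlog : ∀ a b c,
      Real.log ((q (a, c, b) / C c) / ((B a c / C c) * (F c b / C c))) =
        Real.log (A a b / (E a * D b)) - Real.log (B a c / (E a * C c)) := by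
    intro a b c
    have hrat1 : 0 < A a b / (E a * D b) := div_pos (hApos a b) (mul_pos (hEpos a) (hDpos b))
    have hrat2 : 0 < B a c / (E a * C c) := div_pos (hBpos a c) (mul_pos (hEpos a) (hCpos c))
    rw [← Real.log_div hrat1.ne' hrat2.ne']
    congr 1
    exact ratio_eq _ _ _ _ _ _ _ (hCpos c) (hBpos a c) (hFpos c b) (hEpos a) (hDpos b)
      (hkey a c b)
  -- rewrite condMI and mutualInfo
  rw [condMI, mutualInfo, mutualInfo]
  simp only [margin_triple, margin_A, margin_B, margin_GH, margin_C, margin_D, margin_E]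
  have step1 : ∀ a : X, ∀ b : Y, ∀ c : Y,
      q (a, c, b) * Real.log ((q (a, c, b) / C c) / ((B a c / C c) * (F c b / C c))) =
        q (a, c, b) * Real.log (A a b / (E a * D b)) -
          q (a, c, b) * Real.log (B a c / (E a * C c)) := by
    intro a b c
    rw [hlog a b c, mul_sub]
  calc (∑ a : X, ∑ b : Y, ∑ c : Y,
        q (a, c, b) * Real.log ((q (a, c, b) / C c) / ((B a c / C c) * (F c b / C c))))
      = (∑ a : X, ∑ b : Y, ∑ c : Y, (q (a, c, b) * Real.log (A a b / (E a * D b)) -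
          q (a, c, b) * Real.log (B a c / (E a * C c)))) := by
        refine Finset.sum_congr rfl fun a _ => Finset.sum_congr rfl fun b _ =>
          Finset.sum_congr rfl fun c _ => step1 a b c
    _ = (∑ a : X, ∑ b : Y, ∑ c : Y, q (a, c, b) * Real.log (A a b / (E a * D b))) -
        (∑ a : X, ∑ b : Y, ∑ c : Y, q (a, c, b) * Real.log (B a c / (E a * C c))) := by
        simp [Finset.sum_sub_distrib]
    _ = (∑ a : X, ∑ b : Y, A a b * Real.log (A a b / (E a * D b))) -
        (∑ a : X, ∑ c : Y, B a c * Real.log (B a c / (E a * C c))) := by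
        congr 1
        · refine Finset.sum_congr rfl fun a _ => Finset.sum_congr rfl fun b _ => ?_
          rw [← Finset.sum_mul]
        · refine Finset.sum_congr rfl fun a _ => ?_
          rw [Finset.sum_comm]
          refine Finset.sum_congr rfl fun c _ => ?_
          rw [← Finset.sum_mul]
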